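/- If u : ℝ → E is uniformly almost periodic and χ : E → F is bi-Lipschitz (both χ and its inverse are Lipschitz), then 𝔇𝔦(χ ∘ u) = 𝔇𝔦(u). -/

import Mathlib

/-- `τ` is an `ε`-almost period of `u`. -/
def IsAlmostPeriod {E : Type*} [NormedAddCommGroup E] (u : ℝ → E) (ε τ : ℝ) : Prop :=
  ∀ t : ℝ, ‖u (t + τ) - u t‖ ≤ ε

/-- `L` is an inclusion length for `ε`-almost periods of `u`. -/
def IsInclusionLength {E : Type*} [NormedAddCommGroup E] (u : ℝ → E) (ε L : ℝ) : Prop :=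
  0 < L ∧ ∀ a : ℝ, ∃ τ ∈ Set.Icc a (a + L), IsAlmostPeriod u ε τ

/-- The minimal inclusion length `l_u(ε)` for `ε`-almost periods of `u`. -/
noncomputable def inclusionLength {E : Type*} [NormedAddCommGroup E] (u : ℝ → E) (ε : ℝ) : ℝ :=
  sInf {L | IsInclusionLength u ε L}

/-- `u` is uniformly almost periodic. -/
def AlmostPeriodic {E : Type*} [NormedAddCommGroup E] (u : ℝ → E) : Prop :=
  Continuous u ∧ ∀ ε > 0, ∃ L, IsInclusionLength u ε L

/-- The Diophantine dimension `𝔇𝔦(u) = limsup_{ε→0+} ln l_u(ε)/ln(1/ε)`. -/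
noncomputable def diophDim {E : Type*} [NormedAddCommGroup E] (u : ℝ → E) : ℝ :=
  Filter.limsup (fun ε : ℝ => Real.log (inclusionLength u ε) / Real.log (1 / ε)) (nhdsWithin 0 (Set.Ioi 0))

/-- The lower Diophantine dimension `𝔡𝔦(u) = liminf_{ε→0+} ln l_u(ε)/ln(1/ε)`. -/
noncomputable def lowerDiophDim {E : Type*} [NormedAddCommGroup E] (u : ℝ → E) : ℝ :=
  Filter.liminf (fun ε : ℝ => Real.log (inclusionLength u ε) / Real.log (1 / ε)) (nhdsWithin 0 (Set.Ioi 0))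

namespace DDaux

open Filter Set

variable {E : Type*} [NormedAddCommGroup E]

lemma bddBelow_IL (u : ℝ → E) (ε : ℝ) : BddBelow {L | IsInclusionLength u ε L} :=
  ⟨0, fun _ hL => hL.1.le⟩

lemma inclusionLength_nonneg (u : ℝ → E) (ε : ℝ) : 0 ≤ inclusionLength u ε :=
  Real.sInf_nonneg fun _ hL => hL.1.le

lemma IL_mono (u : ℝ → E) {ε₁ ε₂ L : ℝ} (h : ε₁ ≤ ε₂) (hL : IsInclusionLength u ε₁ L) :
    IsInclusionLength u ε₂ L := by
  refine ⟨hL.1, fun a => ?_⟩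
  obtain ⟨τ, hτ, hap⟩ := hL.2 a
  exact ⟨τ, hτ, fun t => (hap t).trans h⟩

lemma incl_mono (u : ℝ → E) {ε₁ ε₂ : ℝ}
    (hne : {L | IsInclusionLength u ε₁ L}.Nonempty) (h : ε₁ ≤ ε₂) :
    inclusionLength u ε₂ ≤ inclusionLength u ε₁ :=
  csInf_le_csInf (bddBelow_IL u ε₂) hne fun _ hL => IL_mono u h hL

/-- The set of eventual upper bounds for the ratio defining the Diophantine dimension. -/
def S (u : ℝ → E) : Set ℝ :=
  {a | ∀ᶠ ε in nhdsWithin (0:ℝ) (Set.Ioi 0),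
    Real.log (inclusionLength u ε) / Real.log (1 / ε) ≤ a}

lemma ev_small {p : ℝ → Prop} {δ : ℝ} (hδ : 0 < δ) (h : ∀ ε : ℝ, 0 < ε → ε < δ → p ε) :
    ∀ᶠ ε in nhdsWithin (0:ℝ) (Set.Ioi 0), p ε := by
  filter_upwards [Ioo_mem_nhdsGT_of_mem (Set.mem_Ico.2 ⟨le_refl (0:ℝ), hδ⟩)] with ε hε
  exact h ε hε.1 hε.2

lemma extract {p : ℝ → Prop} (h : ∀ᶠ ε in nhdsWithin (0:ℝ) (Set.Ioi 0), p ε) :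
    ∃ δ > 0, ∀ ε : ℝ, 0 < ε → ε < δ → p ε := by
  rw [Filter.eventually_iff, mem_nhdsGT_iff_exists_Ioo_subset] at h
  obtain ⟨δ, hδ, hsub⟩ := h
  exact ⟨δ, hδ, fun ε h1 h2 => hsub ⟨h1, h2⟩⟩

lemma S_nonneg (u : ℝ → E) (hne : ∀ ε : ℝ, 0 < ε → {L | IsInclusionLength u ε L}.Nonempty)
    {a : ℝ} (ha : a ∈ S u) : 0 ≤ a := by
  by_contra hneg
  push_neg at hneg
  obtain ⟨δ, hδ, hP⟩ := extract ha
  by_cases hc : ∀ ε : ℝ, 0 < ε → inclusionLength u ε = 0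
  · have h2 := hP (δ / 2) (by positivity) (by linarith)
    rw [hc (δ / 2) (by positivity), Real.log_zero, zero_div] at h2
    linarith
  · push_neg at hc
    obtain ⟨ε₀, hε₀, hc0⟩ := hc
    have hcpos : 0 < inclusionLength u ε₀ :=
      lt_of_le_of_ne (inclusionLength_nonneg u ε₀) (Ne.symm hc0)
    set c := inclusionLength u ε₀ with hc_def
    set δ' := min δ (min ε₀ (min 1 (Real.exp (-(Real.log c) / a)))) with hδ'def
    have hδ'pos : 0 < δ' := by
      refine lt_min hδ (lt_min hε₀ (lt_min one_pos (Real.exp_pos _)))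
    set ε := δ' / 2 with hε_def
    have hεpos : 0 < ε := by positivity
    have hεδ' : ε < δ' := by
      rw [hε_def]; linarith
    have hεδ : ε < δ := lt_of_lt_of_le hεδ' (min_le_left _ _)
    have hεε₀ : ε ≤ ε₀ := le_of_lt (lt_of_lt_of_le hεδ' ((min_le_right _ _).trans (min_le_left _ _)))
    have hε1 : ε < 1 := lt_of_lt_of_le hεδ'
      ((min_le_right _ _).trans ((min_le_right _ _).trans (min_le_left _ _)))
    have hεexp : ε < Real.exp (-(Real.log c) / a) := lt_of_lt_of_le hεδ'
      ((min_le_right _ _).trans ((min_le_right _ _).trans (min_le_right _ _)))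
    have hF := hP ε hεpos hεδ
    rw [one_div, Real.log_inv] at hF
    have hlogε : Real.log ε < 0 := Real.log_neg hεpos hε1
    have hmono : c ≤ inclusionLength u ε := incl_mono u (hne ε hεpos) hεε₀
    have hlogc : Real.log c ≤ Real.log (inclusionLength u ε) := Real.log_le_log hcpos hmono
    have h1 : Real.log (inclusionLength u ε) ≤ a * (-Real.log ε) :=
      (div_le_iff₀ (by linarith)).1 hF
    have h2 : Real.log ε < -(Real.log c) / a := by
      have := Real.log_lt_log hεpos hεexp
      rwa [Real.log_exp] at this
    have h3 : a * (-(Real.log c) / a) < a * Real.log ε := mul_lt_mul_of_neg_left h2 hneg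
    have hane : a ≠ 0 := ne_of_lt hneg
    have h4 : a * (-(Real.log c) / a) = -Real.log c := by
      field_simp
    have h5 : a * (-Real.log ε) = -(a * Real.log ε) := by ring
    linarith

lemma transfer {F : Type*} [NormedAddCommGroup F] (u : ℝ → E) (v : ℝ → F) {K : ℝ} (hK : 0 < K)
    (hle : ∀ ε : ℝ, 0 < ε → inclusionLength v ε ≤ inclusionLength u (ε / K))
    {a b : ℝ} (ha : 0 ≤ a) (hab : a < b) (haS : a ∈ S u) : b ∈ S v := by
  obtain ⟨δ₁, hδ₁, hP⟩ := extract haS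
  set M := a * Real.log K / (b - a) with hM_def
  set δ := min (min 1 (K * δ₁)) (min K (Real.exp (-M))) with hδ_def
  have hδpos : 0 < δ :=
    lt_min (lt_min one_pos (by positivity)) (lt_min hK (Real.exp_pos _))
  apply ev_small hδpos
  intro ε hε hεδ
  have hε1 : ε < 1 := lt_of_lt_of_le hεδ ((min_le_left _ _).trans (min_le_left _ _))
  have hεKδ₁ : ε < K * δ₁ := lt_of_lt_of_le hεδ ((min_le_left _ _).trans (min_le_right _ _))
  have hεK : ε < K := lt_of_lt_of_le hεδ ((min_le_right _ _).trans (min_le_left _ _))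
  have hεexp : ε < Real.exp (-M) := lt_of_lt_of_le hεδ
    ((min_le_right _ _).trans (min_le_right _ _))
  have hεKpos : 0 < ε / K := by positivity
  have hεK1 : ε / K < 1 := (div_lt_one hK).2 hεK
  have hεKδ : ε / K < δ₁ := by
    rw [div_lt_iff₀ hK]
    linarith [mul_comm K δ₁]
  have hF := hP (ε / K) hεKpos hεKδ
  rw [one_div, Real.log_inv] at hF
  have hlogε : Real.log ε < 0 := Real.log_neg hε hε1
  have hlogεK : Real.log (ε / K) < 0 := Real.log_neg hεKpos hεK1
  have h1 : Real.log (inclusionLength u (ε / K)) ≤ a * (-Real.log (ε / K)) :=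
    (div_le_iff₀ (by linarith)).1 hF
  have hlogdiv : Real.log (ε / K) = Real.log ε - Real.log K :=
    Real.log_div (ne_of_gt hε) (ne_of_gt hK)
  have hM : a * Real.log K ≤ (b - a) * (-Real.log ε) := by
    have h2 : Real.log ε < -M := by
      have := Real.log_lt_log hε hεexp
      rwa [Real.log_exp] at this
    have h3 : (b - a) * M ≤ (b - a) * (-Real.log ε) :=
      mul_le_mul_of_nonneg_left (by linarith) (by linarith)
    have h4 : (b - a) * M = a * Real.log K := by
      have hba : b - a ≠ 0 := by linarith
      rw [hM_def, mul_comm, div_mul_cancel₀ _ hba]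
    linarith
  show Real.log (inclusionLength v ε) / Real.log (1 / ε) ≤ b
  rw [one_div, Real.log_inv]
  rw [div_le_iff₀ (by linarith : (0:ℝ) < -Real.log ε)]
  by_cases hv1 : inclusionLength v ε ≤ 1
  · have hnp : Real.log (inclusionLength v ε) ≤ 0 :=
      Real.log_nonpos (inclusionLength_nonneg v ε) hv1
    have : 0 ≤ b * (-Real.log ε) := mul_nonneg (by linarith) (by linarith)
    linarith
  · push_neg at hv1
    have hlogv : Real.log (inclusionLength v ε) ≤ Real.log (inclusionLength u (ε / K)) :=
      Real.log_le_log (lt_trans one_pos hv1) (hle ε hε)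
    have hring : b * (-Real.log ε) = a * (-Real.log ε) + (b - a) * (-Real.log ε) := by ring
    have h5 : a * (-Real.log (ε / K)) = a * (-Real.log ε) + a * Real.log K := by
      rw [hlogdiv]; ring
    linarith

end DDaux

/-- If `u` is almost periodic and `χ` is bi-Lipschitz, then `𝔇𝔦(χ ∘ u) = 𝔇𝔦(u)`. -/
theorem diophDim_biLipschitz_comp {E F : Type*} [NormedAddCommGroup E] [NormedAddCommGroup F]
    (u : ℝ → E) (hu : AlmostPeriodic u) (χ : E → F) (hbij : Function.Bijective χ)
    (K₁ K₂ : ℝ) (hK₁ : 0 < K₁) (hK₂ : 0 < K₂)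
    (hlip : ∀ x y : E, ‖χ x - χ y‖ ≤ K₁ * ‖x - y‖)
    (hlip' : ∀ x y : E, ‖x - y‖ ≤ K₂ * ‖χ x - χ y‖) :
    diophDim (χ ∘ u) = diophDim u := by
  classical
  set v := χ ∘ u with hv_def
  have hneu : ∀ ε : ℝ, 0 < ε → {L | IsInclusionLength u ε L}.Nonempty := fun ε hε => hu.2 ε hε
  -- inclusion lengths of u at ε/K₁ are inclusion lengths of v at ε
  have hILv : ∀ ε : ℝ, 0 < ε → ∀ L, IsInclusionLength u (ε / K₁) L → IsInclusionLength v ε L := by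
    intro ε hε L hL
    refine ⟨hL.1, fun a => ?_⟩
    obtain ⟨τ, hτ, hap⟩ := hL.2 a
    refine ⟨τ, hτ, fun t => ?_⟩
    calc ‖v (t + τ) - v t‖ = ‖χ (u (t + τ)) - χ (u t)‖ := rfl
      _ ≤ K₁ * ‖u (t + τ) - u t‖ := hlip _ _
      _ ≤ K₁ * (ε / K₁) := mul_le_mul_of_nonneg_left (hap t) hK₁.le
      _ = ε := by field_simp
  -- inclusion lengths of v at ε/K₂ are inclusion lengths of u at ε
  have hILu : ∀ ε : ℝ, 0 < ε → ∀ L, IsInclusionLength v (ε / K₂) L → IsInclusionLength u ε L := by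
    intro ε hε L hL
    refine ⟨hL.1, fun a => ?_⟩
    obtain ⟨τ, hτ, hap⟩ := hL.2 a
    refine ⟨τ, hτ, fun t => ?_⟩
    calc ‖u (t + τ) - u t‖ ≤ K₂ * ‖χ (u (t + τ)) - χ (u t)‖ := hlip' _ _
      _ = K₂ * ‖v (t + τ) - v t‖ := rfl
      _ ≤ K₂ * (ε / K₂) := mul_le_mul_of_nonneg_left (hap t) hK₂.le
      _ = ε := by field_simp
  have hnev : ∀ ε : ℝ, 0 < ε → {L | IsInclusionLength v ε L}.Nonempty := by
    intro ε hε
    obtain ⟨L, hL⟩ := hneu (ε / K₁) (by positivity)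
    exact ⟨L, hILv ε hε L hL⟩
  have hle1 : ∀ ε : ℝ, 0 < ε → inclusionLength v ε ≤ inclusionLength u (ε / K₁) := fun ε hε =>
    csInf_le_csInf (DDaux.bddBelow_IL v ε) (hneu (ε / K₁) (by positivity))
      (fun L hL => hILv ε hε L hL)
  have hle2 : ∀ ε : ℝ, 0 < ε → inclusionLength u ε ≤ inclusionLength v (ε / K₂) := fun ε hε =>
    csInf_le_csInf (DDaux.bddBelow_IL u ε) (hnev (ε / K₂) (by positivity))
      (fun L hL => hILu ε hε L hL)
  have h12 : ∀ a ∈ DDaux.S u, ∀ b, a < b → b ∈ DDaux.S v := fun a ha b hab =>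
    DDaux.transfer u v hK₁ hle1 (DDaux.S_nonneg u hneu ha) hab ha
  have h21 : ∀ b ∈ DDaux.S v, ∀ a, b < a → a ∈ DDaux.S u := fun b hb a hba =>
    DDaux.transfer v u hK₂ hle2 (DDaux.S_nonneg v hnev hb) hba hb
  have hgoal : sInf (DDaux.S v) = sInf (DDaux.S u) := by
    rcases Set.eq_empty_or_nonempty (DDaux.S u) with hSe | hSne
    · have hSve : DDaux.S v = ∅ := Set.eq_empty_iff_forall_notMem.2 fun b hb =>
        Set.eq_empty_iff_forall_notMem.1 hSe (b + 1) (h21 b hb (b + 1) (lt_add_one b))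
      rw [hSe, hSve]
    · obtain ⟨a₀, ha₀⟩ := id hSne
      have hSvne : (DDaux.S v).Nonempty := ⟨a₀ + 1, h12 a₀ ha₀ (a₀ + 1) (lt_add_one a₀)⟩
      have hbddv : BddBelow (DDaux.S v) := ⟨0, fun b hb => DDaux.S_nonneg v hnev hb⟩
      have hbddu : BddBelow (DDaux.S u) := ⟨0, fun a ha => DDaux.S_nonneg u hneu ha⟩
      apply le_antisymm
      · refine le_csInf hSne fun a ha => ?_
        refine le_of_forall_gt_imp_ge_of_dense fun b hb => ?_
        exact csInf_le hbddv (h12 a ha b hb)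
      · refine le_csInf hSvne fun b hb => ?_
        refine le_of_forall_gt_imp_ge_of_dense fun a ha => ?_
        exact csInf_le hbddu (h21 b hb a ha)
  rw [diophDim, diophDim, Filter.limsup_eq, Filter.limsup_eq]
  exact hgoal
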